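/- Let p be an odd prime, k = 2l with l ≥ 1, and A, B ∈ M_n(ℤ/p^kℤ). Then the matrix Kloosterman sum K_n(A,B,p^k) = Σ_{X ∈ GL_n(ℤ/p^kℤ)} e^{2πi Tr(AX + X⁻¹B)/p^k} equals Σ_X e^{2πi Tr(AX + X⁻¹B)/p^k}, where the latter sum ranges only over X ∈ GL_n(ℤ/p^kℤ) with XAX ≡ B (mod p^l). -/

import Mathlib

open Matrix Complex Finset

lemma exp_eq_stdAddChar (N : ℕ) [NeZero N] (x : ZMod N) :
    Complex.exp (2 * Real.pi * Complex.I * (x.val : ℂ) / (N : ℂ)) = ZMod.stdAddChar x := by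
  have h := ZMod.stdAddChar_coe (N := N) (x.val : ℤ)
  have h2 : (((x.val : ℤ) : ZMod N)) = x := by
    push_cast
    simp [ZMod.natCast_val, ZMod.cast_id]
  rw [h2] at h
  rw [h]
  push_cast
  ring_nf

lemma mulq_congr {q N : ℕ} [NeZero N] (hdvd : q ∣ N) (hN : N = q * q) {x y : ZMod N}
    (h : ZMod.castHom hdvd (ZMod q) x = ZMod.castHom hdvd (ZMod q) y) :
    (q : ZMod N) * x = (q : ZMod N) * y := by
  have hq : NeZero q := ⟨by rintro rfl; exact (NeZero.ne N) (by simp [hN])⟩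
  have key : ∀ z : ZMod N, ZMod.castHom hdvd (ZMod q) z = 0 → (q : ZMod N) * z = 0 := by
    intro z hz
    have hz' : ((z.val : ℕ) : ZMod q) = 0 := by
      rwa [ZMod.natCast_val, ← ZMod.castHom_apply (h := hdvd)]
    obtain ⟨m, hm⟩ := (ZMod.natCast_eq_zero_iff _ _).mp hz'
    have hzz : z = ((q * m : ℕ) : ZMod N) := by
      rw [← hm]
      simp [ZMod.natCast_val, ZMod.cast_id]
    rw [hzz]
    push_cast
    rw [← mul_assoc, ← Nat.cast_mul, ← hN, ZMod.natCast_self, zero_mul]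
  have h0 := key (x - y) (by rw [map_sub, h, sub_self])
  rw [mul_sub] at h0
  exact sub_eq_zero.mp h0

lemma psi_mulq {q N : ℕ} [NeZero N] [NeZero q] (hN : N = q * q) (w : ZMod q) :
    ZMod.stdAddChar ((q : ZMod N) * ZMod.cast w) = ZMod.stdAddChar w := by
  have h1 : (q : ZMod N) * ZMod.cast w = ((q * w.val : ℕ) : ZMod N) := by
    rw [← ZMod.natCast_val (w) (R := ZMod N)]
    push_cast
    ring
  have h2 := ZMod.stdAddChar_coe (N := N) ((q * w.val : ℕ) : ℤ)
  have h3 := ZMod.stdAddChar_coe (N := q) ((w.val : ℕ) : ℤ)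
  have h4 : (((w.val : ℕ) : ℤ) : ZMod q) = w := by
    push_cast; simp [ZMod.natCast_val, ZMod.cast_id]
  have h5 : (((q * w.val : ℕ) : ℤ) : ZMod N) = ((q * w.val : ℕ) : ZMod N) := by push_cast; ring
  rw [h1, ← h5, h2, ← h4, h3]
  congr 1
  have hqC : (q : ℂ) ≠ 0 := Nat.cast_ne_zero.mpr (NeZero.ne q)
  have hNq : (N : ℂ) = (q : ℂ) * q := by rw [hN]; push_cast; ring
  rw [hNq]
  push_cast
  field_simp
  simp [ZMod.natCast_zmod_val]

lemma trace_single_mul {n : ℕ} {R : Type*} [CommRing R] (i j : Fin n) (u : R)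
    (M : Matrix (Fin n) (Fin n) R) :
    Matrix.trace (Matrix.single j i u * M) = u * M i j := by
  simp [Matrix.trace, Matrix.diag, Matrix.mul_apply, Matrix.single, ite_and,
    Finset.sum_ite_eq, Finset.sum_ite_eq']

lemma sum_matrix_char {q : ℕ} [NeZero q] {n : ℕ} (C : Matrix (Fin n) (Fin n) (ZMod q)) :
    ∑ U : Matrix (Fin n) (Fin n) (ZMod q), (ZMod.stdAddChar (Matrix.trace (U * C)) : ℂ)
      = if C = 0 then (Fintype.card (Matrix (Fin n) (Fin n) (ZMod q)) : ℂ) else 0 := by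
  classical
  split_ifs with h
  · simp [h]
  · set τ : Matrix (Fin n) (Fin n) (ZMod q) →+ ZMod q :=
      AddMonoidHom.mk' (fun U => Matrix.trace (U * C))
        (fun U V => by simp [Matrix.add_mul, Matrix.trace_add]) with hτ
    set Φ : AddChar (Matrix (Fin n) (Fin n) (ZMod q)) ℂ :=
      (ZMod.stdAddChar (N := q)).compAddMonoidHom τ with hΦ
    have hsum : ∑ U : Matrix (Fin n) (Fin n) (ZMod q), (ZMod.stdAddChar (Matrix.trace (U * C)) : ℂ)
        = ∑ U, Φ U := rfl
    rw [hsum]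
    apply AddChar.sum_eq_zero_of_ne_one
    obtain ⟨i, j, hij⟩ : ∃ i j, C i j ≠ 0 := by
      by_contra hc
      push_neg at hc
      exact h (by ext i j; simp [hc])
    have hprim := ZMod.isPrimitive_stdAddChar q hij
    obtain ⟨u, hu⟩ := AddChar.ne_one_iff.mp hprim
    rw [AddChar.mulShift_apply] at hu
    rw [AddChar.ne_one_iff]
    refine ⟨Matrix.single j i u, ?_⟩
    have he : Φ (Matrix.single j i u) = ZMod.stdAddChar (u * C i j) := by
      simp [hΦ, hτ, _root_.trace_single_mul]
    rw [he, mul_comm]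
    exact hu

theorem stmt_15 (p n l : ℕ) [Fact p.Prime] (hp2 : p ≠ 2) (hl : 1 ≤ l)
    [NeZero (p ^ (2 * l))]
    (A B : Matrix (Fin n) (Fin n) (ZMod (p ^ (2 * l)))) :
    ∑ X : GL (Fin n) (ZMod (p ^ (2 * l))),
      Complex.exp (2 * Real.pi * Complex.I *
        ((Matrix.trace (A * (X : Matrix (Fin n) (Fin n) (ZMod (p ^ (2 * l)))) +
          ((X⁻¹ : GL (Fin n) (ZMod (p ^ (2 * l)))) : Matrix (Fin n) (Fin n) (ZMod (p ^ (2 * l)))) * B)).val : ℂ)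
          / (p ^ (2 * l) : ℂ))
    = ∑ X ∈ Finset.univ.filter (fun X : GL (Fin n) (ZMod (p ^ (2 * l))) =>
        ((X : Matrix (Fin n) (Fin n) (ZMod (p ^ (2 * l)))) * A *
          (X : Matrix (Fin n) (Fin n) (ZMod (p ^ (2 * l))))).map
            (ZMod.castHom (pow_dvd_pow p (by omega : l ≤ 2 * l)) (ZMod (p ^ l)))
        = B.map (ZMod.castHom (pow_dvd_pow p (by omega : l ≤ 2 * l)) (ZMod (p ^ l)))),
      Complex.exp (2 * Real.pi * Complex.I *
        ((Matrix.trace (A * (X : Matrix (Fin n) (Fin n) (ZMod (p ^ (2 * l)))) +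
          ((X⁻¹ : GL (Fin n) (ZMod (p ^ (2 * l)))) : Matrix (Fin n) (Fin n) (ZMod (p ^ (2 * l)))) * B)).val : ℂ)
          / (p ^ (2 * l) : ℂ)) := by
  classical
  haveI : NeZero (p ^ l) := ⟨pow_ne_zero _ (Nat.Prime.ne_zero Fact.out)⟩
  have hdvd : p ^ l ∣ p ^ (2 * l) := pow_dvd_pow p (by omega)
  have hN : p ^ (2 * l) = p ^ l * p ^ l := by rw [← pow_add]; congr 1; omega
  set ψ : AddChar (ZMod (p ^ (2 * l))) ℂ := ZMod.stdAddChar with hψ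
  set T : GL (Fin n) (ZMod (p ^ (2 * l))) → ZMod (p ^ (2 * l)) := fun X =>
    Matrix.trace (A * (X : Matrix (Fin n) (Fin n) (ZMod (p ^ (2 * l)))) +
      ((X⁻¹ : GL (Fin n) (ZMod (p ^ (2 * l)))) : Matrix (Fin n) (Fin n) (ZMod (p ^ (2 * l)))) * B) with hT
  have hF : ∀ X : GL (Fin n) (ZMod (p ^ (2 * l))),
      Complex.exp (2 * Real.pi * Complex.I *
        ((Matrix.trace (A * (X : Matrix (Fin n) (Fin n) (ZMod (p ^ (2 * l)))) +
          ((X⁻¹ : GL (Fin n) (ZMod (p ^ (2 * l)))) : Matrix (Fin n) (Fin n) (ZMod (p ^ (2 * l)))) * B)).val : ℂ)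
          / (p ^ (2 * l) : ℂ)) = ψ (T X) := by
    intro X
    rw [hψ, hT, ← exp_eq_stdAddChar]
    push_cast
    ring_nf
  simp only [hF]
  rw [Finset.sum_filter]
  -- notation
  have hqq : ((p ^ l : ℕ) : ZMod (p ^ (2 * l))) * ((p ^ l : ℕ) : ZMod (p ^ (2 * l))) = 0 := by
    rw [← Nat.cast_mul, ← hN, ZMod.natCast_self]
  set W : Matrix (Fin n) (Fin n) (ZMod (p ^ l)) → Matrix (Fin n) (Fin n) (ZMod (p ^ (2 * l))) :=
    fun U => ((p ^ l : ℕ) : ZMod (p ^ (2 * l))) • U.map (ZMod.cast) with hW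
  have hWW : ∀ U, W U * W U = 0 := by
    intro U
    rw [hW]
    simp only
    rw [Matrix.smul_mul, Matrix.mul_smul, smul_smul, hqq, zero_smul]
  set g : Matrix (Fin n) (Fin n) (ZMod (p ^ l)) → GL (Fin n) (ZMod (p ^ (2 * l))) := fun U =>
    ⟨1 + W U, 1 - W U,
      by
        have h := hWW U
        have e : (1 + W U) * (1 - W U) = 1 - W U * W U := by noncomm_ring
        rw [e, h, sub_zero],
      by
        have h := hWW U
        have e : (1 - W U) * (1 + W U) = 1 - W U * W U := by noncomm_ring
        rw [e, h, sub_zero]⟩ with hg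
  -- the trace transformation
  have hTmul : ∀ (X : GL (Fin n) (ZMod (p ^ (2 * l)))) (U : Matrix (Fin n) (Fin n) (ZMod (p ^ l))),
      T (X * g U) = T X + ((p ^ l : ℕ) : ZMod (p ^ (2 * l))) *
        Matrix.trace (U.map (ZMod.cast) *
          (A * (X : Matrix (Fin n) (Fin n) (ZMod (p ^ (2 * l)))) -
            ((X⁻¹ : GL (Fin n) (ZMod (p ^ (2 * l)))) : Matrix (Fin n) (Fin n) (ZMod (p ^ (2 * l)))) * B)) := by
    intro X U
    have h1 : ((X * g U : GL (Fin n) (ZMod (p ^ (2 * l)))) : Matrix (Fin n) (Fin n) (ZMod (p ^ (2 * l))))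
        = (X : Matrix (Fin n) (Fin n) (ZMod (p ^ (2 * l)))) * (1 + W U) := rfl
    have h2 : (((X * g U)⁻¹ : GL (Fin n) (ZMod (p ^ (2 * l)))) : Matrix (Fin n) (Fin n) (ZMod (p ^ (2 * l))))
        = (1 - W U) * ((X⁻¹ : GL (Fin n) (ZMod (p ^ (2 * l)))) : Matrix (Fin n) (Fin n) (ZMod (p ^ (2 * l)))) := by
      rw [_root_.mul_inv_rev, Units.val_mul]
      rfl
    rw [hT]
    simp only [h1, h2]
    have expand : A * ((X : Matrix (Fin n) (Fin n) (ZMod (p ^ (2 * l)))) * (1 + W U)) +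
        ((1 - W U) * ((X⁻¹ : GL (Fin n) (ZMod (p ^ (2 * l)))) : Matrix (Fin n) (Fin n) (ZMod (p ^ (2 * l))))) * B
        = (A * (X : Matrix (Fin n) (Fin n) (ZMod (p ^ (2 * l)))) +
            ((X⁻¹ : GL (Fin n) (ZMod (p ^ (2 * l)))) : Matrix (Fin n) (Fin n) (ZMod (p ^ (2 * l)))) * B) +
          (A * (X : Matrix (Fin n) (Fin n) (ZMod (p ^ (2 * l)))) * W U -
            W U * (((X⁻¹ : GL (Fin n) (ZMod (p ^ (2 * l)))) : Matrix (Fin n) (Fin n) (ZMod (p ^ (2 * l)))) * B)) := by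
      noncomm_ring
    rw [expand, Matrix.trace_add, Matrix.trace_sub,
      Matrix.trace_mul_comm (A * (X : Matrix (Fin n) (Fin n) (ZMod (p ^ (2 * l))))) (W U),
      ← Matrix.trace_sub, ← Matrix.mul_sub, hW]
    simp only
    rw [Matrix.smul_mul, Matrix.trace_smul, smul_eq_mul]
  -- cast lemma for the extra trace term
  have round : ∀ w : ZMod (p ^ l),
      ZMod.castHom hdvd (ZMod (p ^ l)) (ZMod.cast w : ZMod (p ^ (2 * l))) = w := by
    intro w
    rw [← ZMod.natCast_val (w) (R := ZMod (p ^ (2 * l))), map_natCast]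
    simp [ZMod.natCast_val, ZMod.cast_id]
  have hcast : ∀ (C : Matrix (Fin n) (Fin n) (ZMod (p ^ (2 * l))))
      (U : Matrix (Fin n) (Fin n) (ZMod (p ^ l))),
      ((p ^ l : ℕ) : ZMod (p ^ (2 * l))) * Matrix.trace (U.map (ZMod.cast) * C)
        = ((p ^ l : ℕ) : ZMod (p ^ (2 * l))) *
            ZMod.cast (Matrix.trace (U * C.map (ZMod.castHom hdvd (ZMod (p ^ l))))) := by
    intro C U
    apply mulq_congr hdvd hN
    rw [round]
    rw [AddMonoidHom.map_trace (ZMod.castHom hdvd (ZMod (p ^ l)))]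
    congr 1
    show ((U.map (ZMod.cast) * C).map (ZMod.castHom hdvd (ZMod (p ^ l)))) = _
    rw [Matrix.map_mul, Matrix.map_map]
    congr 1
    ext i j
    simp [round]
  -- inner sum over U
  have hinner : ∀ X : GL (Fin n) (ZMod (p ^ (2 * l))),
      ∑ U : Matrix (Fin n) (Fin n) (ZMod (p ^ l)), ψ (T (X * g U))
        = ψ (T X) * (if ((A * (X : Matrix (Fin n) (Fin n) (ZMod (p ^ (2 * l)))) -
            ((X⁻¹ : GL (Fin n) (ZMod (p ^ (2 * l)))) : Matrix (Fin n) (Fin n) (ZMod (p ^ (2 * l)))) * B).map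
              (ZMod.castHom hdvd (ZMod (p ^ l))) = 0)
          then (Fintype.card (Matrix (Fin n) (Fin n) (ZMod (p ^ l))) : ℂ) else 0) := by
    intro X
    have step : ∀ U : Matrix (Fin n) (Fin n) (ZMod (p ^ l)),
        ψ (T (X * g U)) = ψ (T X) * ZMod.stdAddChar (Matrix.trace (U *
          ((A * (X : Matrix (Fin n) (Fin n) (ZMod (p ^ (2 * l)))) -
            ((X⁻¹ : GL (Fin n) (ZMod (p ^ (2 * l)))) : Matrix (Fin n) (Fin n) (ZMod (p ^ (2 * l)))) * B).map
              (ZMod.castHom hdvd (ZMod (p ^ l)))))) := by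
      intro U
      rw [hTmul, AddChar.map_add_eq_mul, hcast, hψ, psi_mulq hN]
    rw [Finset.sum_congr rfl (fun U _ => step U), ← Finset.mul_sum, sum_matrix_char]
  -- the bijection step
  have hbij : ∀ U : Matrix (Fin n) (Fin n) (ZMod (p ^ l)),
      ∑ X : GL (Fin n) (ZMod (p ^ (2 * l))), ψ (T (X * g U))
        = ∑ X : GL (Fin n) (ZMod (p ^ (2 * l))), ψ (T X) :=
    fun U => Fintype.sum_equiv (Equiv.mulRight (g U)) _ _ (fun X => rfl)
  -- condition equivalence
  have hcond : ∀ X : GL (Fin n) (ZMod (p ^ (2 * l))),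
      (((A * (X : Matrix (Fin n) (Fin n) (ZMod (p ^ (2 * l)))) -
          ((X⁻¹ : GL (Fin n) (ZMod (p ^ (2 * l)))) : Matrix (Fin n) (Fin n) (ZMod (p ^ (2 * l)))) * B).map
            (ZMod.castHom hdvd (ZMod (p ^ l)))) = 0) ↔
      (((X : Matrix (Fin n) (Fin n) (ZMod (p ^ (2 * l)))) * A *
          (X : Matrix (Fin n) (Fin n) (ZMod (p ^ (2 * l))))).map
            (ZMod.castHom (pow_dvd_pow p (by omega : l ≤ 2 * l)) (ZMod (p ^ l)))
        = B.map (ZMod.castHom (pow_dvd_pow p (by omega : l ≤ 2 * l)) (ZMod (p ^ l)))) := by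
    intro X
    set ch := ZMod.castHom hdvd (ZMod (p ^ l)) with hch
    set Xb := ((X : Matrix (Fin n) (Fin n) (ZMod (p ^ (2 * l))))).map ch with hXb
    set Xb' := (((X⁻¹ : GL (Fin n) (ZMod (p ^ (2 * l)))) : Matrix (Fin n) (Fin n) (ZMod (p ^ (2 * l))))).map ch with hXb'
    have hmul1 : Xb * Xb' = 1 := by
      rw [hXb, hXb', ← Matrix.map_mul]
      have : ((X : Matrix (Fin n) (Fin n) (ZMod (p ^ (2 * l))))) *
          ((X⁻¹ : GL (Fin n) (ZMod (p ^ (2 * l)))) : Matrix (Fin n) (Fin n) (ZMod (p ^ (2 * l)))) = 1 :=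
        X.mul_inv
      rw [this]
      simp
    have hmul2 : Xb' * Xb = 1 := by
      rw [hXb, hXb', ← Matrix.map_mul]
      have : (((X⁻¹ : GL (Fin n) (ZMod (p ^ (2 * l)))) : Matrix (Fin n) (Fin n) (ZMod (p ^ (2 * l))))) *
          ((X : Matrix (Fin n) (Fin n) (ZMod (p ^ (2 * l))))) = 1 := X.inv_mul
      rw [this]
      simp
    have hsub : ((A * (X : Matrix (Fin n) (Fin n) (ZMod (p ^ (2 * l)))) -
        ((X⁻¹ : GL (Fin n) (ZMod (p ^ (2 * l)))) : Matrix (Fin n) (Fin n) (ZMod (p ^ (2 * l)))) * B).map ch)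
        = A.map ch * Xb - Xb' * B.map ch := by
      rw [hXb, hXb']
      show ch.mapMatrix _ = _
      rw [map_sub]
      simp only [RingHom.mapMatrix_apply, Matrix.map_mul]
    have hXAX : (((X : Matrix (Fin n) (Fin n) (ZMod (p ^ (2 * l)))) * A *
        (X : Matrix (Fin n) (Fin n) (ZMod (p ^ (2 * l))))).map ch) = Xb * A.map ch * Xb := by
      rw [Matrix.map_mul, Matrix.map_mul]
    rw [hsub, hXAX, sub_eq_zero]
    constructor
    · intro h
      calc Xb * A.map ch * Xb = Xb * (A.map ch * Xb) := by rw [mul_assoc]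
        _ = Xb * (Xb' * B.map ch) := by rw [h]
        _ = (Xb * Xb') * B.map ch := by rw [mul_assoc]
        _ = B.map ch := by rw [hmul1, one_mul]
    · intro h
      have h2 : Xb' * (Xb * A.map ch * Xb) = Xb' * B.map ch := by rw [h]
      calc A.map ch * Xb = (Xb' * Xb) * (A.map ch * Xb) := by rw [hmul2, one_mul]
        _ = Xb' * (Xb * A.map ch * Xb) := by noncomm_ring
        _ = Xb' * B.map ch := h2
  -- assemble
  have hcardne : ((Fintype.card (Matrix (Fin n) (Fin n) (ZMod (p ^ l)))) : ℂ) ≠ 0 :=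
    Nat.cast_ne_zero.mpr Fintype.card_ne_zero
  apply mul_left_cancel₀ hcardne
  calc ((Fintype.card (Matrix (Fin n) (Fin n) (ZMod (p ^ l)))) : ℂ) *
        ∑ X : GL (Fin n) (ZMod (p ^ (2 * l))), ψ (T X)
      = ∑ _U : Matrix (Fin n) (Fin n) (ZMod (p ^ l)),
          ∑ X : GL (Fin n) (ZMod (p ^ (2 * l))), ψ (T X) := by
        rw [Finset.sum_const, card_univ, nsmul_eq_mul]
    _ = ∑ U : Matrix (Fin n) (Fin n) (ZMod (p ^ l)),
          ∑ X : GL (Fin n) (ZMod (p ^ (2 * l))), ψ (T (X * g U)) := by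
        exact Finset.sum_congr rfl fun U _ => (hbij U).symm
    _ = ∑ X : GL (Fin n) (ZMod (p ^ (2 * l))),
          ∑ U : Matrix (Fin n) (Fin n) (ZMod (p ^ l)), ψ (T (X * g U)) := Finset.sum_comm
    _ = ∑ X : GL (Fin n) (ZMod (p ^ (2 * l))),
          ((Fintype.card (Matrix (Fin n) (Fin n) (ZMod (p ^ l)))) : ℂ) *
            (if ((X : Matrix (Fin n) (Fin n) (ZMod (p ^ (2 * l)))) * A *
                (X : Matrix (Fin n) (Fin n) (ZMod (p ^ (2 * l))))).map
                  (ZMod.castHom (pow_dvd_pow p (by omega : l ≤ 2 * l)) (ZMod (p ^ l)))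
              = B.map (ZMod.castHom (pow_dvd_pow p (by omega : l ≤ 2 * l)) (ZMod (p ^ l)))
            then ψ (T X) else 0) := by
        refine Finset.sum_congr rfl fun X _ => ?_
        rw [hinner X, if_congr (hcond X) rfl rfl]
        split_ifs with h
        · ring
        · ring
    _ = ((Fintype.card (Matrix (Fin n) (Fin n) (ZMod (p ^ l)))) : ℂ) *
        ∑ X : GL (Fin n) (ZMod (p ^ (2 * l))),
          (if ((X : Matrix (Fin n) (Fin n) (ZMod (p ^ (2 * l)))) * A *
              (X : Matrix (Fin n) (Fin n) (ZMod (p ^ (2 * l))))).map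
                (ZMod.castHom (pow_dvd_pow p (by omega : l ≤ 2 * l)) (ZMod (p ^ l)))
            = B.map (ZMod.castHom (pow_dvd_pow p (by omega : l ≤ 2 * l)) (ZMod (p ^ l)))
          then ψ (T X) else 0) := by
        rw [Finset.mul_sum]
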